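/- For every real exponent $\tilde\gamma < -1/2$ there exists a constant $N = N(\tilde\gamma)$ such that for every $u \in L^2(0,1)$ one has $\sum_{k=1}^{\infty} \|u e^k\|_{H^{\tilde\gamma}}^2 \le N \|u\|_{L^2(0,1)}^2$, where $e^k(x) = \sqrt{2}\sin(\pi k x)$ and $\|v\|_{H^{\tilde\gamma}}^2 = \sum_{l=1}^\infty (\pi l)^{2\tilde\gamma} |(v, e^l)_{L^2}|^2$. Moreover one may take $N(-1) = 1/3$. -/

import Mathlib

open MeasureTheory Set

noncomputable def ek (k : ℕ) (x : ℝ) : ℝ := Real.sqrt 2 * Real.sin (Real.pi * (k + 1) * x)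

noncomputable def ip (v : ℝ → ℝ) (k : ℕ) : ℝ := ∫ x in Ioo (0:ℝ) 1, v x * ek k x

noncomputable def HnormSq (γ : ℝ) (v : ℝ → ℝ) : ℝ :=
  ∑' l : ℕ, (Real.pi * (l + 1)) ^ (2 * γ) * (ip v l) ^ 2

/-! ### Auxiliary lemmas -/

lemma aux_two_sin (a b : ℝ) : 2 * (Real.sin a * Real.sin b) = Real.cos (a - b) - Real.cos (a + b) := by
  have h := Real.cos_sub_cos (a - b) (a + b)
  have h1 : (a - b + (a + b)) / 2 = a := by ring
  have h2 : (a - b - (a + b)) / 2 = -b := by ring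
  rw [h1, h2, Real.sin_neg] at h
  linarith

lemma aux_int_cos (c : ℝ) (hc : c ≠ 0) : ∫ x in (0:ℝ)..1, Real.cos (c * x) = Real.sin c / c := by
  rw [intervalIntegral.integral_comp_mul_left _ hc]
  simp [integral_cos]
  ring

lemma cos_ii (c : ℝ) : IntervalIntegrable (fun x => Real.cos (c * x)) volume 0 1 :=
  (Real.continuous_cos.comp (continuous_const.mul continuous_id)).intervalIntegrable 0 1

lemma ek_orth (k l : ℕ) :
    ∫ x in Ioo (0:ℝ) 1, ek k x * ek l x = if k = l then (1:ℝ) else 0 := by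
  rw [← MeasureTheory.integral_Ioc_eq_integral_Ioo, ← intervalIntegral.integral_of_le zero_le_one]
  have hpt : ∀ x : ℝ, ek k x * ek l x =
      Real.cos (Real.pi * ((k:ℝ) - l) * x) - Real.cos (Real.pi * ((k:ℝ) + l + 2) * x) := by
    intro x
    have h2 : Real.sqrt 2 * Real.sqrt 2 = 2 := Real.mul_self_sqrt (by norm_num)
    have h := aux_two_sin (Real.pi * ((k:ℝ)+1) * x) (Real.pi * ((l:ℝ)+1) * x)
    have e1 : Real.pi * ((k:ℝ)+1) * x - Real.pi * ((l:ℝ)+1) * x = Real.pi * ((k:ℝ) - l) * x := by ring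
    have e2 : Real.pi * ((k:ℝ)+1) * x + Real.pi * ((l:ℝ)+1) * x = Real.pi * ((k:ℝ) + l + 2) * x := by ring
    rw [e1, e2] at h
    unfold ek
    linear_combination h + (Real.sin (Real.pi * ((k:ℝ)+1) * x) * Real.sin (Real.pi * ((l:ℝ)+1) * x)) * h2
  rw [intervalIntegral.integral_congr (g := fun x => Real.cos (Real.pi * ((k:ℝ) - l) * x)
      - Real.cos (Real.pi * ((k:ℝ) + l + 2) * x)) (fun x _ => hpt x)]
  rw [intervalIntegral.integral_sub (cos_ii _) (cos_ii _)]
  have hc2 : Real.pi * ((k:ℝ) + l + 2) ≠ 0 := by positivity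
  have hsin2 : Real.sin (Real.pi * ((k:ℝ) + l + 2)) = 0 := by
    have : Real.pi * ((k:ℝ) + l + 2) = ((k + l + 2 : ℕ) : ℝ) * Real.pi := by push_cast; ring
    rw [this, Real.sin_nat_mul_pi]
  rw [aux_int_cos _ hc2, hsin2]
  by_cases hkl : k = l
  · subst hkl
    simp only [sub_self, mul_zero, zero_mul, Real.cos_zero]
    norm_num
  · have hne : (k:ℝ) - l ≠ 0 := by
      simp only [sub_ne_zero]
      exact_mod_cast hkl
    have hc1 : Real.pi * ((k:ℝ) - l) ≠ 0 := mul_ne_zero Real.pi_ne_zero hne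
    have hsin1 : Real.sin (Real.pi * ((k:ℝ) - l)) = 0 := by
      have : Real.pi * ((k:ℝ) - l) = (((k:ℤ) - l : ℤ) : ℝ) * Real.pi := by push_cast; ring
      rw [this, Real.sin_int_mul_pi]
    rw [aux_int_cos _ hc1, hsin1]
    simp [hkl]

noncomputable abbrev mu01 : Measure ℝ := volume.restrict (Ioo (0:ℝ) 1)

instance : IsFiniteMeasure mu01 := by
  constructor
  rw [Measure.restrict_apply_univ]
  simp [Real.volume_Ioo]

lemma ek_cont (k : ℕ) : Continuous (ek k) := by
  unfold ek; fun_prop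

lemma ek_abs_le (k : ℕ) (x : ℝ) : ‖ek k x‖ ≤ Real.sqrt 2 := by
  rw [Real.norm_eq_abs]
  unfold ek
  rw [abs_mul, abs_of_nonneg (Real.sqrt_nonneg 2)]
  calc Real.sqrt 2 * |Real.sin (Real.pi * (k + 1) * x)| ≤ Real.sqrt 2 * 1 :=
        mul_le_mul_of_nonneg_left (Real.abs_sin_le_one _) (Real.sqrt_nonneg 2)
    _ = Real.sqrt 2 := mul_one _

lemma ek_sq_le (k : ℕ) (x : ℝ) : (ek k x)^2 ≤ 2 := by
  have h := ek_abs_le k x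
  rw [Real.norm_eq_abs] at h
  have := sq_abs (ek k x)
  nlinarith [Real.sq_sqrt (by norm_num : (2:ℝ) ≥ 0), abs_nonneg (ek k x)]

lemma ek_memLp (k : ℕ) : MemLp (ek k) 2 mu01 :=
  MemLp.of_bound (ek_cont k).aestronglyMeasurable (Real.sqrt 2)
    (Filter.Eventually.of_forall (ek_abs_le k))

noncomputable def ekL (k : ℕ) : Lp ℝ 2 mu01 := (ek_memLp k).toLp _

lemma inner_toLp (f g : ℝ → ℝ) (hf : MemLp f 2 mu01) (hg : MemLp g 2 mu01) :
    (inner ℝ (hf.toLp f) (hg.toLp g) : ℝ) = ∫ x in Ioo (0:ℝ) 1, f x * g x := by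
  rw [MeasureTheory.L2.inner_def]
  apply integral_congr_ae
  filter_upwards [hf.coeFn_toLp, hg.coeFn_toLp] with x h1 h2
  simp [h1, h2, RCLike.inner_apply, mul_comm]

lemma ekL_orth : Orthonormal ℝ ekL := by
  rw [orthonormal_iff_ite]
  intro k l
  rw [show ekL k = (ek_memLp k).toLp _ from rfl, show ekL l = (ek_memLp l).toLp _ from rfl,
    inner_toLp _ _ (ek_memLp k) (ek_memLp l), ek_orth]

lemma bessel (f : ℝ → ℝ) (hf : MemLp f 2 mu01) :
    Summable (fun k => (∫ x in Ioo (0:ℝ) 1, f x * ek k x)^2) ∧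
    ∑' k : ℕ, (∫ x in Ioo (0:ℝ) 1, f x * ek k x)^2 ≤ ∫ x in Ioo (0:ℝ) 1, (f x)^2 := by
  have key : ∀ k : ℕ, ‖(inner ℝ (ekL k) (hf.toLp f) : ℝ)‖^2 = (∫ x in Ioo (0:ℝ) 1, f x * ek k x)^2 := by
    intro k
    rw [real_inner_comm, show ekL k = (ek_memLp k).toLp _ from rfl,
      inner_toLp _ _ hf (ek_memLp k), Real.norm_eq_abs, sq_abs]
  have hnorm : ‖hf.toLp f‖^2 = ∫ x in Ioo (0:ℝ) 1, (f x)^2 := by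
    rw [← real_inner_self_eq_norm_sq, inner_toLp _ _ hf hf]
    apply integral_congr_ae
    exact Filter.Eventually.of_forall (fun x => (sq (f x)).symm)
  constructor
  · have := (ekL_orth.inner_products_summable (hf.toLp f))
    simpa only [key] using this
  · have := ekL_orth.tsum_inner_products_le (hf.toLp f)
    simp only [key] at this
    rwa [hnorm] at this

lemma summable_pow (γ : ℝ) (hγ : γ < -1/2) :
    Summable (fun l : ℕ => (Real.pi * ((l:ℝ)+1)) ^ (2*γ)) := by
  have h2γ : 2*γ < -1 := by linarith
  have h1 : Summable (fun n : ℕ => (n:ℝ) ^ (2*γ)) := Real.summable_nat_rpow.mpr h2γ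
  have h2 : Summable (fun n : ℕ => ((n:ℝ)+1) ^ (2*γ)) := by
    have := (summable_nat_add_iff 1).mpr h1
    simpa [Nat.cast_add] using this
  have h3 := h2.mul_left (Real.pi ^ (2*γ))
  refine h3.congr (fun l => ?_)
  rw [← Real.mul_rpow Real.pi_pos.le (by positivity)]

lemma tsum_pow_neg2 : ∑' l : ℕ, (Real.pi * ((l:ℝ)+1)) ^ (2*(-1:ℝ)) = 1/6 := by
  have key : ∀ l : ℕ, (Real.pi * ((l:ℝ)+1)) ^ (2*(-1:ℝ)) = Real.pi⁻¹^2 * (1/((l:ℝ)+1)^2) := by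
    intro l
    have hl : ((l:ℝ)+1) ≠ 0 := by positivity
    rw [show (2*(-1:ℝ)) = ((-2:ℤ):ℝ) by norm_num, Real.rpow_intCast, zpow_neg]
    rw [zpow_two]
    field_simp
  simp_rw [key]
  rw [tsum_mul_left]
  have h0 := hasSum_zeta_two
  have h2 : HasSum (fun n : ℕ => (1:ℝ)/(((n+1:ℕ)):ℝ)^2) (Real.pi^2/6) :=
    (hasSum_nat_add_iff (f := fun n : ℕ => (1:ℝ)/(n:ℝ)^2) 1).mpr (by simpa using h0)
  have h1 : HasSum (fun n : ℕ => (1:ℝ)/((n:ℝ)+1)^2) (Real.pi^2/6) := by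
    simpa using h2
  rw [h1.tsum_eq, inv_pow]
  rw [div_eq_mul_inv, mul_comm]
  field_simp

lemma key_lemma (γ : ℝ) (hγ : γ < -1/2) (u : ℝ → ℝ)
    (hu : MemLp u 2 (volume.restrict (Ioo (0:ℝ) 1))) :
    ∑' k : ℕ, HnormSq γ (fun x => u x * ek k x) ≤
      (2 * ∑' l : ℕ, (Real.pi * ((l:ℝ)+1)) ^ (2*γ)) * ∫ x in Ioo (0:ℝ) 1, (u x) ^ 2 := by
  set I : ℝ := ∫ x in Ioo (0:ℝ) 1, (u x) ^ 2 with hI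
  have hI0 : 0 ≤ I := integral_nonneg (fun x => sq_nonneg _)
  -- membership lemmas
  have hmem : ∀ k : ℕ, MemLp (fun x => u x * ek k x) 2 mu01 := by
    intro k
    refine MemLp.of_le_mul (c := Real.sqrt 2) hu (hu.aestronglyMeasurable.mul (ek_cont k).aestronglyMeasurable) ?_
    refine Filter.Eventually.of_forall (fun x => ?_)
    rw [norm_mul, mul_comm (Real.sqrt 2) _]
    exact mul_le_mul_of_nonneg_left (ek_abs_le k x) (norm_nonneg _)
  -- L² bound on u * ek l
  have hsq : ∀ l : ℕ, ∫ x in Ioo (0:ℝ) 1, (u x * ek l x)^2 ≤ 2 * I := by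
    intro l
    have h1 : Integrable (fun x => (u x * ek l x)^2) mu01 := (hmem l).integrable_sq
    have h2 : Integrable (fun x => 2 * (u x)^2) mu01 := hu.integrable_sq.const_mul 2
    calc ∫ x in Ioo (0:ℝ) 1, (u x * ek l x)^2 ≤ ∫ x in Ioo (0:ℝ) 1, 2 * (u x)^2 := by
          refine integral_mono h1 h2 (fun x => ?_)
          have h3 : (u x * ek l x)^2 = (u x)^2 * (ek l x)^2 := by ring
          rw [h3]
          calc (u x)^2 * (ek l x)^2 ≤ (u x)^2 * 2 :=
                mul_le_mul_of_nonneg_left (ek_sq_le l x) (sq_nonneg _)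
            _ = 2 * (u x)^2 := by ring
      _ = 2 * I := by rw [hI, integral_const_mul]
  -- symmetry of ip
  have hsymm : ∀ k l : ℕ, ip (fun x => u x * ek k x) l =
      ∫ x in Ioo (0:ℝ) 1, (u x * ek l x) * ek k x := by
    intro k l
    unfold ip
    exact integral_congr_ae (Filter.Eventually.of_forall (fun x => by ring))
  -- Bessel per l
  have hb : ∀ l : ℕ, Summable (fun k => (ip (fun x => u x * ek k x) l)^2) ∧
      ∑' k : ℕ, (ip (fun x => u x * ek k x) l)^2 ≤ 2 * I := by
    intro l
    have h := bessel (fun x => u x * ek l x) (hmem l)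
    constructor
    · exact h.1.congr (fun k => by rw [hsymm k l])
    · calc ∑' k : ℕ, (ip (fun x => u x * ek k x) l)^2
          = ∑' k : ℕ, (∫ x in Ioo (0:ℝ) 1, (u x * ek l x) * ek k x)^2 := by
            exact tsum_congr (fun k => by rw [hsymm k l])
        _ ≤ ∫ x in Ioo (0:ℝ) 1, (u x * ek l x)^2 := h.2
        _ ≤ 2 * I := hsq l
  -- Bessel per k (for the other direction of summability)
  have hbk : ∀ k : ℕ, Summable (fun l => (ip (fun x => u x * ek k x) l)^2) := by
    intro k
    exact (bessel (fun x => u x * ek k x) (hmem k)).1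
  set F : ℕ → ℕ → ℝ := fun l k => (Real.pi * ((l:ℝ)+1)) ^ (2*γ) * (ip (fun x => u x * ek k x) l)^2
    with hF
  have hFnn : ∀ l k, 0 ≤ F l k := fun l k =>
    mul_nonneg (Real.rpow_nonneg (by positivity) _) (sq_nonneg _)
  have hFk : ∀ l, Summable (F l) := fun l => (hb l).1.mul_left _
  have hFl_le : ∀ l, ∑' k, F l k ≤ (Real.pi * ((l:ℝ)+1)) ^ (2*γ) * (2 * I) := by
    intro l
    rw [hF]
    simp only
    rw [tsum_mul_left]
    exact mul_le_mul_of_nonneg_left (hb l).2 (Real.rpow_nonneg (by positivity) _)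
  have hcs : Summable (fun l : ℕ => (Real.pi * ((l:ℝ)+1)) ^ (2*γ)) := summable_pow γ hγ
  have hSig : Summable (fun l => ∑' k, F l k) := by
    refine Summable.of_nonneg_of_le (fun l => tsum_nonneg (fun k => hFnn l k)) hFl_le ?_
    exact hcs.mul_right (2 * I)
  have huncurry : Summable (Function.uncurry F) :=
    (summable_prod_of_nonneg (fun p => hFnn p.1 p.2)).mpr ⟨hFk, hSig⟩
  have hFkl : ∀ k, Summable (fun l => F l k) := by
    intro k
    refine Summable.of_nonneg_of_le (fun l => hFnn l k)
      (fun l => ?_) ((hbk k).mul_left (Real.pi ^ (2*γ)))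
    refine mul_le_mul_of_nonneg_right ?_ (sq_nonneg _)
    have h1 : Real.pi ≤ Real.pi * ((l:ℝ)+1) := by
      nlinarith [Real.pi_pos, Nat.cast_nonneg (α := ℝ) l]
    exact Real.rpow_le_rpow_of_nonpos Real.pi_pos h1 (by linarith)
  have hswap : ∑' (k) (l), F l k = ∑' (l) (k), F l k := Summable.tsum_comm' huncurry hFk hFkl
  have hLHS : ∑' k : ℕ, HnormSq γ (fun x => u x * ek k x) = ∑' (k) (l), F l k := by
    refine tsum_congr (fun k => ?_)
    unfold HnormSq
    rfl
  rw [hLHS, hswap]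
  calc ∑' (l) (k), F l k ≤ ∑' l : ℕ, (Real.pi * ((l:ℝ)+1)) ^ (2*γ) * (2 * I) :=
        Summable.tsum_le_tsum hFl_le hSig (hcs.mul_right (2 * I))
    _ = (∑' l : ℕ, (Real.pi * ((l:ℝ)+1)) ^ (2*γ)) * (2 * I) := tsum_mul_right
    _ = (2 * ∑' l : ℕ, (Real.pi * ((l:ℝ)+1)) ^ (2*γ)) * I := by ring

theorem stmt0 (γ : ℝ) (hγ : γ < -1/2) :
    (∃ N : ℝ, ∀ u : ℝ → ℝ, MemLp u 2 (volume.restrict (Ioo (0:ℝ) 1)) →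
      ∑' k : ℕ, HnormSq γ (fun x => u x * ek k x) ≤ N * ∫ x in Ioo (0:ℝ) 1, (u x) ^ 2) ∧
    (∀ u : ℝ → ℝ, MemLp u 2 (volume.restrict (Ioo (0:ℝ) 1)) →
      ∑' k : ℕ, HnormSq (-1) (fun x => u x * ek k x) ≤ (1/3) * ∫ x in Ioo (0:ℝ) 1, (u x) ^ 2) := by
  constructor
  · exact ⟨2 * ∑' l : ℕ, (Real.pi * ((l:ℝ)+1)) ^ (2*γ), fun u hu => key_lemma γ hγ u hu⟩
  · intro u hu
    have h := key_lemma (-1) (by norm_num) u hu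
    rwa [tsum_pow_neg2, show (2 * (1/6 : ℝ)) = 1/3 by norm_num] at h
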